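/- Let $N \geq 2$, $k \geq 1$, $p = N^{-1/k}$, and $P_\ell = p^{k-\ell}$ for $0 \leq \ell \leq k$ (so $P_0 = 1/N$ and $P_k = 1$). For $n \leq N$, define $E[M_n] = n P_0 + \sum_{\ell=1}^{k} n P_\ell \prod_{j<\ell}(1-P_j)^n$. Then there exists a constant $C$ (independent of $n$ and $N$) such that $E[M_n] \leq C \cdot N^{1/k}$ for all $0 \leq n \leq N$. -/

import Mathlib

open Finset

lemma xexp_le_one (x : ℝ) (hx : 0 ≤ x) : x * Real.exp (-x) ≤ 1 := by
  have h1 : x ≤ Real.exp x := by linarith [Real.add_one_le_exp x]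
  have h2 : x * Real.exp (-x) ≤ Real.exp x * Real.exp (-x) :=
    mul_le_mul_of_nonneg_right h1 (Real.exp_pos _).le
  have h3 : Real.exp x * Real.exp (-x) = 1 := by
    rw [← Real.exp_add]; simp
  linarith

/-- Scalability of the Green Coin protocol: with `p = N^{-1/k}` and
`P_ℓ = p^{k-ℓ}`, the expected number of mined blocks
`E[M_n] = n P_0 + ∑_{ℓ=1}^k n P_ℓ ∏_{j<ℓ}(1-P_j)^n` is `O(N^{1/k})`
uniformly in `0 ≤ n ≤ N`. -/
theorem stmt2 (k : ℕ) (hk : 1 ≤ k) :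
    ∃ C : ℝ, ∀ N : ℕ, 2 ≤ N →
      ∀ p : ℝ, p = (N : ℝ) ^ (-(1 : ℝ) / (k : ℝ)) →
      ∀ P : ℕ → ℝ, (∀ ℓ, P ℓ = p ^ (k - ℓ)) →
      ∀ n : ℕ, n ≤ N →
        (n : ℝ) * P 0 + ∑ ℓ ∈ Finset.Icc 1 k,
            (n : ℝ) * P ℓ * ∏ j ∈ Finset.range ℓ, (1 - P j) ^ n
          ≤ C * (N : ℝ) ^ ((1 : ℝ) / (k : ℝ)) := by
  refine ⟨(k : ℝ) + 1, fun N hN p hp P hP n hn => ?_⟩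
  have hk0 : (k : ℝ) ≠ 0 := Nat.cast_ne_zero.mpr (by omega)
  have hN2 : (2 : ℝ) ≤ (N : ℝ) := by exact_mod_cast hN
  have hN0 : (0 : ℝ) < N := by linarith
  set A : ℝ := (N : ℝ) ^ ((1 : ℝ) / (k : ℝ)) with hA
  have hA1 : 1 ≤ A := by
    rw [hA]
    calc (1:ℝ) = (1:ℝ) ^ ((1:ℝ) / (k:ℝ)) := (Real.one_rpow _).symm
      _ ≤ (N:ℝ) ^ ((1:ℝ) / (k:ℝ)) :=
        Real.rpow_le_rpow (by norm_num) (by linarith) (by positivity)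
  have hA0 : 0 < A := by linarith
  have hppos : 0 < p := by rw [hp]; exact Real.rpow_pos_of_pos hN0 _
  have hpA : p * A = 1 := by
    rw [hp, hA, ← Real.rpow_add hN0,
      show (-(1:ℝ)/(k:ℝ) + (1:ℝ)/(k:ℝ)) = 0 by ring, Real.rpow_zero]
  have hp1 : p ≤ 1 := by nlinarith
  have hPpos : ∀ j, 0 < P j := fun j => by rw [hP]; positivity
  have hP1 : ∀ j, P j ≤ 1 := fun j => by
    rw [hP]; exact pow_le_one₀ hppos.le hp1
  have hPk : p ^ k = (N : ℝ)⁻¹ := by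
    rw [hp, ← Real.rpow_natCast ((N : ℝ) ^ (-(1:ℝ) / (k:ℝ))) k,
      ← Real.rpow_mul hN0.le]
    rw [show (-(1:ℝ) / (k:ℝ)) * (k : ℕ) = -1 by field_simp]
    rw [Real.rpow_neg_one]
  -- first term
  have hfirst : (n : ℝ) * P 0 ≤ 1 := by
    rw [hP, Nat.sub_zero, hPk]
    have hnN : (n : ℝ) ≤ N := Nat.cast_le.mpr hn
    calc (n:ℝ) * (N:ℝ)⁻¹ ≤ (N:ℝ) * (N:ℝ)⁻¹ := by gcongr
      _ = 1 := mul_inv_cancel₀ (ne_of_gt hN0)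
  -- per-summand bound
  have hterm : ∀ ℓ ∈ Finset.Icc 1 k,
      (n : ℝ) * P ℓ * ∏ j ∈ Finset.range ℓ, (1 - P j) ^ n ≤ A := by
    intro ℓ hℓ
    rw [Finset.mem_Icc] at hℓ
    set m := ℓ - 1 with hm
    have hℓm : ℓ = m + 1 := by omega
    have hPeq : P ℓ = A * P m := by
      have hsub : k - m = (k - ℓ) + 1 := by omega
      rw [hP ℓ, hP m, hsub, pow_succ]
      calc p ^ (k - ℓ) = p ^ (k - ℓ) * (p * A) := by rw [hpA, mul_one]
        _ = A * (p ^ (k - ℓ) * p) := by ring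
    have hprod : ∏ j ∈ Finset.range ℓ, (1 - P j) ^ n ≤ (1 - P m) ^ n := by
      rw [hℓm, Finset.prod_range_succ]
      have hX : ∏ j ∈ Finset.range m, (1 - P j) ^ n ≤ 1 :=
        Finset.prod_le_one (fun j _ => pow_nonneg (by linarith [hP1 j]) n)
          (fun j _ => pow_le_one₀ (by linarith [hP1 j]) (by linarith [hPpos j]))
      exact mul_le_of_le_one_left (pow_nonneg (by linarith [hP1 m]) n) hX
    have hexp : (1 - P m) ^ n ≤ Real.exp (-((n:ℝ) * P m)) := by
      have h1 : 1 - P m ≤ Real.exp (-(P m)) := by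
        linarith [Real.add_one_le_exp (-(P m))]
      calc (1 - P m) ^ n ≤ (Real.exp (-(P m))) ^ n :=
            pow_le_pow_left₀ (by linarith [hP1 m]) h1 n
        _ = Real.exp (-((n:ℝ) * P m)) := by
            rw [← Real.exp_nat_mul]; ring_nf
    have hkey : (n:ℝ) * P m * Real.exp (-((n:ℝ) * P m)) ≤ 1 :=
      xexp_le_one _ (mul_nonneg (Nat.cast_nonneg n) (hPpos m).le)
    have hE0 : (0:ℝ) < Real.exp (-((n:ℝ) * P m)) := Real.exp_pos _
    calc (n : ℝ) * P ℓ * ∏ j ∈ Finset.range ℓ, (1 - P j) ^ n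
        ≤ (n : ℝ) * P ℓ * Real.exp (-((n:ℝ) * P m)) := by
          have := hprod.trans hexp
          have hnP : 0 ≤ (n:ℝ) * P ℓ := mul_nonneg (Nat.cast_nonneg n) (hPpos ℓ).le
          exact mul_le_mul_of_nonneg_left this hnP
      _ = A * ((n:ℝ) * P m * Real.exp (-((n:ℝ) * P m))) := by
          rw [hPeq]; ring
      _ ≤ A * 1 := mul_le_mul_of_nonneg_left hkey hA0.le
      _ = A := mul_one A
  have hsum : ∑ ℓ ∈ Finset.Icc 1 k,
      (n : ℝ) * P ℓ * ∏ j ∈ Finset.range ℓ, (1 - P j) ^ n ≤ (k : ℝ) * A := by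
    calc ∑ ℓ ∈ Finset.Icc 1 k,
        (n : ℝ) * P ℓ * ∏ j ∈ Finset.range ℓ, (1 - P j) ^ n
        ≤ ∑ _ℓ ∈ Finset.Icc 1 k, A := Finset.sum_le_sum hterm
      _ = (k : ℝ) * A := by
          rw [Finset.sum_const, Nat.card_Icc]
          simp [nsmul_eq_mul]
  have h1A : (1:ℝ) ≤ A := hA1
  calc (n : ℝ) * P 0 + ∑ ℓ ∈ Finset.Icc 1 k,
      (n : ℝ) * P ℓ * ∏ j ∈ Finset.range ℓ, (1 - P j) ^ n
      ≤ 1 + (k:ℝ) * A := add_le_add hfirst hsum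
    _ ≤ A + (k:ℝ) * A := by linarith
    _ = ((k:ℝ) + 1) * A := by ring
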